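/- Every normal subgroup of ZM(m,n,r) is characteristic. -/

import Mathlib

def ZMrels (m n : ℕ) (r : ℤ) : Set (FreeGroup Bool) :=
  {FreeGroup.of true ^ m, FreeGroup.of false ^ n,
   (FreeGroup.of false)⁻¹ * FreeGroup.of true * FreeGroup.of false * (FreeGroup.of true) ^ (-r)}

abbrev ZM (m n : ℕ) (r : ℤ) : Type := PresentedGroup (ZMrels m n r)

def ZMa (m n : ℕ) (r : ℤ) : ZM m n r := PresentedGroup.of true

def ZMb (m n : ℕ) (r : ℤ) : ZM m n r := PresentedGroup.of false

namespace ZMproof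

open Subgroup
open scoped commutatorElement

variable {G : Type*} [Group G]

/-- Bezout trick: if `y ^ m = 1`, `y ^ c ∈ S` and `gcd(m, c) = 1` then `y ∈ S`. -/
lemma mem_of_zpow_mem {m : ℕ} {c : ℤ} {y : G} (S : Subgroup G)
    (hy : y ^ (m : ℤ) = 1) (hc : IsCoprime (m : ℤ) c) (h : y ^ c ∈ S) : y ∈ S := by
  obtain ⟨u, v, huv⟩ := hc
  have key : y = (y ^ c) ^ v := by
    calc y = y ^ ((m : ℤ) * u + c * v) := by
            rw [show (m : ℤ) * u + c * v = 1 by linarith, zpow_one]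
      _ = (y ^ (m : ℤ)) ^ u * (y ^ c) ^ v := by rw [← zpow_mul, ← zpow_mul, zpow_add]
      _ = (y ^ c) ^ v := by rw [hy, one_zpow, one_mul]
  rw [key]
  exact S.zpow_mem h v

lemma eq_one_of_pow_eq_one {m n : ℕ} {x : G} (hco : Nat.Coprime m n)
    (h1 : x ^ m = 1) (h2 : x ^ n = 1) : x = 1 := by
  have hd : orderOf x ∣ Nat.gcd m n :=
    Nat.dvd_gcd (orderOf_dvd_of_pow_eq_one h1) (orderOf_dvd_of_pow_eq_one h2)
  rw [hco] at hd
  exact orderOf_eq_one_iff.mp (Nat.dvd_one.mp hd)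

lemma zpow_eq_of_dvd_sub {x : G} {k : ℕ} (hx : x ^ k = 1) {i j : ℤ}
    (h : (k : ℤ) ∣ i - j) : x ^ i = x ^ j := by
  obtain ⟨c, hc⟩ := h
  have : i = j + (k : ℤ) * c := by linarith
  rw [this, zpow_add, zpow_mul, zpow_natCast, hx, one_zpow, mul_one]

lemma exists_npow_eq {k : ℕ} (hk : 0 < k) {x : G} (hx : x ^ k = 1) (j : ℤ) :
    ∃ j' : ℕ, x ^ j = x ^ j' := by
  refine ⟨(j % (k : ℤ)).toNat, ?_⟩
  have hk' : (k : ℤ) ≠ 0 := by exact_mod_cast hk.ne'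
  have h0 : 0 ≤ j % (k : ℤ) := Int.emod_nonneg j hk'
  rw [← zpow_natCast, Int.toNat_of_nonneg h0]
  apply zpow_eq_of_dvd_sub hx
  simpa using Int.dvd_self_sub_of_emod_eq rfl

/-- In a finite cyclic group, subgroups of equal cardinality are equal. -/
lemma cyclic_subgroup_eq_of_card_eq {C : Type*} [Group C] [Finite C] [IsCyclic C]
    {S T : Subgroup C} (h : Nat.card S = Nat.card T) : S = T := by
  classical
  cases nonempty_fintype C
  have key : ∀ U : Subgroup C,
      (U : Set C).toFinset = Finset.univ.filter (fun b : C => b ^ (Nat.card U) = 1) := by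
    intro U
    apply Finset.eq_of_subset_of_card_le
    · intro x hx
      rw [Set.mem_toFinset] at hx
      refine Finset.mem_filter.mpr ⟨Finset.mem_univ x, ?_⟩
      have hx2 : (⟨x, hx⟩ : U) ^ Nat.card U = 1 := pow_card_eq_one'
      exact congrArg Subtype.val hx2
    · have h1 : (Finset.univ.filter (fun b : C => b ^ (Nat.card U) = 1)).card ≤ Nat.card U := by
        simpa using IsCyclic.card_pow_eq_one_le (α := C) (n := Nat.card U) Nat.card_pos
      have h2 : (U : Set C).toFinset.card = Nat.card U := by
        rw [Set.toFinset_card, Nat.card_eq_fintype_card]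
        exact Fintype.card_congr (Equiv.refl _)
      omega
  have : (S : Set C).toFinset = (T : Set C).toFinset := by
    rw [key S, key T, h]
  exact SetLike.ext' (by simpa [Set.toFinset_inj] using this)

lemma isCyclic_zpowers (a : G) : IsCyclic (zpowers a) := by
  refine ⟨⟨⟨a, mem_zpowers a⟩, ?_⟩⟩
  rintro ⟨x, hx⟩
  rw [mem_zpowers_iff] at hx
  obtain ⟨k, rfl⟩ := hx
  exact ⟨k, by ext; simp⟩

lemma eq_of_le_zpowers [Finite G] {a : G} {S T : Subgroup G}
    (hS : S ≤ zpowers a) (hT : T ≤ zpowers a)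
    (h : Nat.card S = Nat.card T) : S = T := by
  haveI := isCyclic_zpowers a
  have e1 : S.subgroupOf (zpowers a) = T.subgroupOf (zpowers a) := by
    apply cyclic_subgroup_eq_of_card_eq
    rw [Nat.card_congr (Subgroup.subgroupOfEquivOfLe hS).toEquiv,
      Nat.card_congr (Subgroup.subgroupOfEquivOfLe hT).toEquiv, h]
  calc S = (S.subgroupOf (zpowers a)).map (zpowers a).subtype := by
        rw [Subgroup.subgroupOf_map_subtype, inf_eq_left.mpr hS]
    _ = (T.subgroupOf (zpowers a)).map (zpowers a).subtype := by rw [e1]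
    _ = T := by rw [Subgroup.subgroupOf_map_subtype, inf_eq_left.mpr hT]


section ZMfacts

variable (m n : ℕ) (r : ℤ)

lemma mk_one {x : FreeGroup Bool} (hx : x ∈ ZMrels m n r) :
    PresentedGroup.mk (ZMrels m n r) x = 1 := by
  rw [show PresentedGroup.mk (ZMrels m n r) x = QuotientGroup.mk x from rfl]
  exact (QuotientGroup.eq_one_iff (N := Subgroup.normalClosure (ZMrels m n r)) x).mpr
    (Subgroup.subset_normalClosure hx)

lemma rel_a : ZMa m n r ^ m = 1 := by
  have h := mk_one m n r (x := FreeGroup.of true ^ m) (by simp [ZMrels])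
  rw [map_pow] at h
  exact h

lemma rel_b : ZMb m n r ^ n = 1 := by
  have h := mk_one m n r (x := FreeGroup.of false ^ n) (by simp [ZMrels])
  rw [map_pow] at h
  exact h

lemma rel_c : (ZMb m n r)⁻¹ * ZMa m n r * ZMb m n r = ZMa m n r ^ r := by
  have h := mk_one m n r
    (x := (FreeGroup.of false)⁻¹ * FreeGroup.of true * FreeGroup.of false *
      (FreeGroup.of true) ^ (-r)) (by simp [ZMrels])
  simp only [map_mul, map_inv, map_zpow] at h
  have h2 := mul_eq_one_iff_eq_inv.mp h
  rw [zpow_neg, inv_inv] at h2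
  exact h2

lemma cop_r (hn : 0 < n) (hr : (m : ℤ) ∣ r ^ n - 1) : IsCoprime (m : ℤ) r := by
  obtain ⟨k, hk⟩ := hr
  refine ⟨-k, r ^ (n - 1), ?_⟩
  have h1 : r ^ (n - 1) * r = r ^ n := by
    rw [← pow_succ, Nat.sub_add_cancel hn]
  nlinarith [hk, h1]

lemma conj_a (s : ℤ) :
    (ZMb m n r)⁻¹ * ZMa m n r ^ s * ZMb m n r = ZMa m n r ^ (s * r) := by
  have h := map_zpow (MulAut.conj (ZMb m n r)⁻¹) (ZMa m n r) s
  simp only [MulAut.conj_apply, inv_inv] at h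
  rw [h, rel_c, ← zpow_mul, mul_comm r s]

lemma conj_a_pow : ∀ (j : ℕ) (s : ℤ),
    (ZMb m n r ^ j)⁻¹ * ZMa m n r ^ s * ZMb m n r ^ j = ZMa m n r ^ (s * r ^ j) := by
  intro j
  induction j with
  | zero => intro s; simp
  | succ j ih =>
    intro s
    rw [pow_succ, mul_inv_rev]
    have e : (ZMb m n r)⁻¹ * (ZMb m n r ^ j)⁻¹ * ZMa m n r ^ s * (ZMb m n r ^ j * ZMb m n r)
        = (ZMb m n r)⁻¹ * ((ZMb m n r ^ j)⁻¹ * ZMa m n r ^ s * ZMb m n r ^ j) * ZMb m n r := by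
      group
    rw [e, ih s, conj_a m n r, mul_assoc, ← pow_succ]

lemma conj_a_inv (hn : 0 < n) (s : ℤ) :
    ZMb m n r * ZMa m n r ^ s * (ZMb m n r)⁻¹ = ZMa m n r ^ (s * r ^ (n - 1)) := by
  have hb : ZMb m n r ^ (n - 1) = (ZMb m n r)⁻¹ := by
    apply eq_inv_of_mul_eq_one_left
    rw [← pow_succ, Nat.sub_add_cancel hn, rel_b]
  have h := conj_a_pow m n r (n - 1) s
  rw [hb, inv_inv] at h
  exact h

lemma A_normal (hn : 0 < n) : (Subgroup.zpowers (ZMa m n r)).Normal := by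
  rw [← Subgroup.normalizer_eq_top_iff, eq_top_iff]
  intro x _
  refine PresentedGroup.generated_by _ _ ?_ x
  intro j
  cases j with
  | true => exact Subgroup.le_normalizer (Subgroup.mem_zpowers _)
  | false =>
    show ZMb m n r ∈ Subgroup.normalizer (Subgroup.zpowers (ZMa m n r) : Set (ZM m n r))
    rw [Subgroup.mem_normalizer_iff]
    intro h
    constructor
    · intro hh
      rw [Subgroup.mem_zpowers_iff] at hh
      obtain ⟨s, rfl⟩ := hh
      rw [conj_a_inv m n r hn]
      exact Subgroup.zpow_mem_zpowers _ _
    · intro hh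
      rw [Subgroup.mem_zpowers_iff] at hh
      obtain ⟨s, hs⟩ := hh
      have hval : h = (ZMb m n r)⁻¹ * ZMa m n r ^ s * ZMb m n r := by
        rw [hs]; group
      rw [hval, conj_a m n r s]
      exact Subgroup.zpow_mem_zpowers _ _

lemma gen_top :
    Subgroup.zpowers (ZMa m n r) ⊔ Subgroup.zpowers (ZMb m n r) = ⊤ := by
  rw [eq_top_iff, ← PresentedGroup.closure_range_of (ZMrels m n r), Subgroup.closure_le]
  rintro x ⟨j, rfl⟩
  cases j with
  | false => exact Subgroup.mem_sup_right (Subgroup.mem_zpowers _)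
  | true => exact Subgroup.mem_sup_left (Subgroup.mem_zpowers _)

lemma exists_decomp (hn : 0 < n) (g : ZM m n r) :
    ∃ (i : ℤ) (j : ℕ), g = ZMa m n r ^ i * ZMb m n r ^ j := by
  have hg : g ∈ Subgroup.zpowers (ZMa m n r) ⊔ Subgroup.zpowers (ZMb m n r) := by
    rw [gen_top]; trivial
  haveI := A_normal m n r hn
  rw [← SetLike.mem_coe, Subgroup.normal_mul] at hg
  obtain ⟨x, hx, y, hy, rfl⟩ := hg
  rw [SetLike.mem_coe, Subgroup.mem_zpowers_iff] at hx hy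
  obtain ⟨i, rfl⟩ := hx
  obtain ⟨jz, rfl⟩ := hy
  obtain ⟨j, hj⟩ := exists_npow_eq hn (rel_b m n r) jz
  exact ⟨i, j, by rw [hj]⟩

lemma mem_parts (hn : 0 < n) (hco2 : IsCoprime (m : ℤ) (r - 1)) (hr : (m : ℤ) ∣ r ^ n - 1)
    (H : Subgroup (ZM m n r)) (hH : H.Normal) {g : ZM m n r} (hg : g ∈ H) :
    ∃ (x y : ZM m n r), x ∈ H ⊓ Subgroup.zpowers (ZMa m n r) ∧
      y ∈ H ⊓ Subgroup.zpowers (ZMb m n r) ∧ g = x * y := by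
  obtain ⟨i, j, rfl⟩ := exists_decomp m n r hn g
  have hc : (ZMb m n r)⁻¹ * (ZMa m n r ^ i * ZMb m n r ^ j) * ZMb m n r
      = ZMa m n r ^ (i * r) * ZMb m n r ^ j := by
    have h1 : (ZMb m n r)⁻¹ * (ZMa m n r ^ i * ZMb m n r ^ j) * ZMb m n r
        = ((ZMb m n r)⁻¹ * ZMa m n r ^ i * ZMb m n r) *
          ((ZMb m n r)⁻¹ * ZMb m n r ^ j * ZMb m n r) := by group
    rw [h1, conj_a m n r i]
    congr 1
    group
  have hmem : (ZMa m n r ^ i * ZMb m n r ^ j)⁻¹ *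
      ((ZMb m n r)⁻¹ * (ZMa m n r ^ i * ZMb m n r ^ j) * ZMb m n r) ∈ H := by
    refine mul_mem (inv_mem hg) ?_
    have h2 := hH.conj_mem _ hg (ZMb m n r)⁻¹
    simpa [inv_inv] using h2
  rw [hc] at hmem
  have hsimp : (ZMa m n r ^ i * ZMb m n r ^ j)⁻¹ * (ZMa m n r ^ (i * r) * ZMb m n r ^ j)
      = (ZMb m n r ^ j)⁻¹ * ZMa m n r ^ (i * (r - 1)) * ZMb m n r ^ j := by
    have h3 : ZMa m n r ^ (i * r) = ZMa m n r ^ i * ZMa m n r ^ (i * (r - 1)) := by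
      rw [← zpow_add]
      congr 1
      ring
    rw [h3]
    group
  rw [hsimp, conj_a_pow m n r j] at hmem
  have hy : ZMa m n r ^ (i * ((r - 1) * r ^ j)) ∈ H := by
    rw [show i * ((r - 1) * r ^ j) = i * (r - 1) * r ^ j by ring]
    exact hmem
  rw [zpow_mul] at hy
  have ha_m : (ZMa m n r ^ i) ^ (m : ℤ) = 1 := by
    rw [← zpow_mul, mul_comm, zpow_mul, zpow_natCast, rel_a, one_zpow]
  have hcop : IsCoprime (m : ℤ) ((r - 1) * r ^ j) :=
    hco2.mul_right ((cop_r m n r hn hr).pow_right)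
  have hai : ZMa m n r ^ i ∈ H := ZMproof.mem_of_zpow_mem H ha_m hcop hy
  have hbj : ZMb m n r ^ j ∈ H := by
    have h4 := mul_mem (inv_mem hai) hg
    rwa [inv_mul_cancel_left] at h4
  exact ⟨ZMa m n r ^ i, ZMb m n r ^ j,
    ⟨hai, Subgroup.zpow_mem_zpowers _ _⟩,
    ⟨hbj, Subgroup.npow_mem_zpowers _ _⟩, rfl⟩

end ZMfacts


section ZMmain

variable (m n : ℕ) (r : ℤ)

lemma comm_eq (hn : 0 < n) (hco2 : IsCoprime (m : ℤ) (r - 1)) :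
    commutator (ZM m n r) = Subgroup.zpowers (ZMa m n r) := by
  haveI := A_normal m n r hn
  apply le_antisymm
  · rw [commutator_def, Subgroup.commutator_le]
    intro g _ h _
    rw [show (Subgroup.zpowers (ZMa m n r)) =
      (QuotientGroup.mk' (Subgroup.zpowers (ZMa m n r))).ker by
        rw [QuotientGroup.ker_mk']]
    rw [MonoidHom.mem_ker]
    have key : ∀ x : ZM m n r, ∃ t : ℤ,
        QuotientGroup.mk' (Subgroup.zpowers (ZMa m n r)) x
          = (QuotientGroup.mk' (Subgroup.zpowers (ZMa m n r)) (ZMb m n r)) ^ t := by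
      intro x
      obtain ⟨i, j, rfl⟩ := exists_decomp m n r hn x
      refine ⟨(j : ℤ), ?_⟩
      rw [map_mul, map_zpow, map_pow]
      have h1 : QuotientGroup.mk' (Subgroup.zpowers (ZMa m n r)) (ZMa m n r) = 1 := by
        rw [← MonoidHom.mem_ker, QuotientGroup.ker_mk']
        exact Subgroup.mem_zpowers _
      rw [h1, one_zpow, one_mul, zpow_natCast]
    obtain ⟨t, ht⟩ := key g
    obtain ⟨u, hu⟩ := key h
    rw [map_commutatorElement, ht, hu, commutatorElement_eq_one_iff_commute]
    exact Commute.zpow_zpow (Commute.refl _) t u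
  · rw [Subgroup.zpowers_le]
    apply ZMproof.mem_of_zpow_mem (m := m) (c := r - 1) (commutator (ZM m n r))
    · rw [zpow_natCast]; exact rel_a m n r
    · exact hco2
    · have hval : ZMa m n r ^ (r - 1) = ⁅(ZMa m n r)⁻¹, (ZMb m n r)⁻¹⁆ := by
        rw [commutatorElement_def, inv_inv, inv_inv]
        have h5 : ZMa m n r ^ (r - 1) = (ZMa m n r)⁻¹ * ZMa m n r ^ r := by
          rw [show (ZMa m n r)⁻¹ = ZMa m n r ^ (-1 : ℤ) by simp, ← zpow_add]
          congr 1
          ring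
        rw [h5, ← rel_c]
        group
      rw [hval, _root_.commutator_def]
      exact Subgroup.commutator_mem_commutator (Subgroup.mem_top _) (Subgroup.mem_top _)

lemma finite_zm (hm : 0 < m) (hn : 0 < n) : Finite (ZM m n r) := by
  haveI : NeZero m := ⟨hm.ne'⟩
  haveI : NeZero n := ⟨hn.ne'⟩
  apply Finite.of_surjective
    (f := fun p : ZMod m × ZMod n => ZMa m n r ^ (p.1.val : ℤ) * ZMb m n r ^ p.2.val)
  intro g
  obtain ⟨i, j, rfl⟩ := exists_decomp m n r hn g
  refine ⟨((i : ZMod m), (j : ZMod n)), ?_⟩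
  have h1 : ZMa m n r ^ (((i : ZMod m).val : ℤ)) = ZMa m n r ^ i := by
    apply ZMproof.zpow_eq_of_dvd_sub (rel_a m n r)
    have : ((((i : ZMod m).val : ℤ) - i : ℤ) : ZMod m) = 0 := by
      push_cast
      simp [ZMod.natCast_val, ZMod.cast_id]
    exact (ZMod.intCast_zmod_eq_zero_iff_dvd _ _).mp this
  have h2 : ZMb m n r ^ ((j : ZMod n).val) = ZMb m n r ^ j := by
    rw [← zpow_natCast, ← zpow_natCast]
    apply ZMproof.zpow_eq_of_dvd_sub (rel_b m n r)
    have : ((((j : ZMod n).val : ℤ) - j : ℤ) : ZMod n) = 0 := by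
      push_cast
      simp [ZMod.natCast_val, ZMod.cast_id]
    exact (ZMod.intCast_zmod_eq_zero_iff_dvd _ _).mp this
  simp only [h1, h2]

lemma inf_bot (hco : Nat.Coprime m n) :
    Subgroup.zpowers (ZMa m n r) ⊓ Subgroup.zpowers (ZMb m n r) = ⊥ := by
  rw [eq_bot_iff]
  intro x hx
  rw [Subgroup.mem_inf, Subgroup.mem_zpowers_iff, Subgroup.mem_zpowers_iff] at hx
  obtain ⟨⟨s, hs⟩, ⟨t, ht⟩⟩ := hx
  rw [Subgroup.mem_bot]
  apply ZMproof.eq_one_of_pow_eq_one hco (x := x)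
  · rw [← hs, ← zpow_natCast, ← zpow_mul, mul_comm, zpow_mul, zpow_natCast, rel_a, one_zpow]
  · rw [← ht, ← zpow_natCast, ← zpow_mul, mul_comm, zpow_mul, zpow_natCast, rel_b, one_zpow]

lemma card_eq_mul (hn : 0 < n) (hco : Nat.Coprime m n) (hco2 : IsCoprime (m : ℤ) (r - 1))
    (hr : (m : ℤ) ∣ r ^ n - 1) (H : Subgroup (ZM m n r)) (hH : H.Normal) :
    Nat.card H = Nat.card (H ⊓ Subgroup.zpowers (ZMa m n r) : Subgroup (ZM m n r)) *
      Nat.card (H ⊓ Subgroup.zpowers (ZMb m n r) : Subgroup (ZM m n r)) := by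
  rw [← Nat.card_prod]
  apply Nat.card_congr
  apply Equiv.symm
  refine Equiv.ofBijective (fun p => (⟨p.1.1 * p.2.1, mul_mem p.1.2.1 p.2.2.1⟩ : H)) ⟨?_, ?_⟩
  · rintro ⟨⟨x, hx⟩, ⟨y, hy⟩⟩ ⟨⟨x', hx'⟩, ⟨y', hy'⟩⟩ hpq
    have h0 : x * y = x' * y' := congrArg Subtype.val hpq
    have hxA := (Subgroup.mem_inf.mp hx).2
    have hx'A := (Subgroup.mem_inf.mp hx').2
    have hyB := (Subgroup.mem_inf.mp hy).2
    have hy'B := (Subgroup.mem_inf.mp hy').2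
    have h1 : x = x' * y' * y⁻¹ := eq_mul_inv_of_mul_eq h0
    have h2 : x'⁻¹ * x = y' * y⁻¹ := by rw [h1]; group
    have hzA : x'⁻¹ * x ∈ Subgroup.zpowers (ZMa m n r) := mul_mem (inv_mem hx'A) hxA
    have hzB : x'⁻¹ * x ∈ Subgroup.zpowers (ZMb m n r) := by
      rw [h2]; exact mul_mem hy'B (inv_mem hyB)
    have hz1 : x'⁻¹ * x = 1 := by
      have hmem := inf_bot m n r hco ▸ (Subgroup.mem_inf.mpr ⟨hzA, hzB⟩)
      rwa [Subgroup.mem_bot] at hmem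
    have hxx : x = x' := (inv_mul_eq_one.mp hz1).symm
    have hyy : y = y' := by
      have h3 : y' * y⁻¹ = 1 := by rw [← h2, hz1]
      exact (mul_inv_eq_one.mp h3).symm
    refine Prod.ext ?_ ?_
    · exact Subtype.ext hxx
    · exact Subtype.ext hyy
  · rintro ⟨g, hg⟩
    obtain ⟨x, y, hx, hy, hxy⟩ := mem_parts m n r hn hco2 hr H hH hg
    exact ⟨(⟨x, hx⟩, ⟨y, hy⟩), Subtype.ext hxy.symm⟩

end ZMmain

end ZMproof

theorem stmt6 (m n : ℕ) (r : ℤ) (hm : 0 < m) (hn : 0 < n)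
    (hco : Nat.Coprime m n) (hco2 : IsCoprime (m : ℤ) (r - 1))
    (hr : (m : ℤ) ∣ r ^ n - 1) :
    ∀ H : Subgroup (ZM m n r), H.Normal → H.Characteristic := by
  haveI hFin : Finite (ZM m n r) := ZMproof.finite_zm m n r hm hn
  intro H hH
  rw [Subgroup.characteristic_iff_map_eq]
  intro φ
  have hAchar : (Subgroup.zpowers (ZMa m n r)).map φ.toMonoidHom
      = Subgroup.zpowers (ZMa m n r) := by
    rw [← ZMproof.comm_eq m n r hn hco2]
    exact Subgroup.characteristic_iff_map_eq.mp inferInstance φ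
  set H' := H.map φ.toMonoidHom with hH'def
  haveI hH'n : H'.Normal := Subgroup.Normal.map hH φ.toMonoidHom φ.surjective
  have hcardmap : ∀ K : Subgroup (ZM m n r),
      Nat.card (K.map φ.toMonoidHom) = Nat.card K := by
    intro K
    exact (Nat.card_congr (Subgroup.equivMapOfInjective K φ.toMonoidHom φ.injective).toEquiv).symm
  have hmapinfA : (H ⊓ Subgroup.zpowers (ZMa m n r)).map φ.toMonoidHom
      = H' ⊓ Subgroup.zpowers (ZMa m n r) := by
    rw [Subgroup.map_inf _ _ _ φ.injective, hAchar]
  have hinfA : H' ⊓ Subgroup.zpowers (ZMa m n r) = H ⊓ Subgroup.zpowers (ZMa m n r) := by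
    apply ZMproof.eq_of_le_zpowers inf_le_right inf_le_right
    rw [← hmapinfA, hcardmap]
  have e1 := ZMproof.card_eq_mul m n r hn hco hco2 hr H hH
  have e2 := ZMproof.card_eq_mul m n r hn hco hco2 hr H' hH'n
  have e3 : Nat.card H' = Nat.card H := hcardmap H
  rw [e1] at e3
  rw [e2, hinfA] at e3
  have hpos : 0 < Nat.card (H ⊓ Subgroup.zpowers (ZMa m n r) : Subgroup (ZM m n r)) :=
    Nat.card_pos
  have hcardB : Nat.card (H' ⊓ Subgroup.zpowers (ZMb m n r) : Subgroup (ZM m n r))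
      = Nat.card (H ⊓ Subgroup.zpowers (ZMb m n r) : Subgroup (ZM m n r)) :=
    Nat.eq_of_mul_eq_mul_left hpos e3
  have hinfB : H' ⊓ Subgroup.zpowers (ZMb m n r) = H ⊓ Subgroup.zpowers (ZMb m n r) :=
    ZMproof.eq_of_le_zpowers inf_le_right inf_le_right hcardB
  have hdecomp : ∀ K : Subgroup (ZM m n r), K.Normal →
      K = (K ⊓ Subgroup.zpowers (ZMa m n r)) ⊔ (K ⊓ Subgroup.zpowers (ZMb m n r)) := by
    intro K hK
    apply le_antisymm
    · intro g hg
      obtain ⟨x, y, hx, hy, rfl⟩ := ZMproof.mem_parts m n r hn hco2 hr K hK hg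
      exact mul_mem (Subgroup.mem_sup_left hx) (Subgroup.mem_sup_right hy)
    · exact sup_le inf_le_left inf_le_left
  rw [hdecomp H' hH'n, hinfA, hinfB, ← hdecomp H hH]
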